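/- The inequality θ̄·δB̲·z⁺ + θ̄·δB̄·z⁻ + δB̄·θ − δp ≤ θ̄·δB̄ is valid on P₀ ∪ P₁ ∪ P₂, and hence on conv(P₀ ∪ P₁ ∪ P₂). -/
import Mathlib

abbrev Pt := ℝ × ℝ × ℝ × ℝ × ℝ

def P0 (tl tu : ℝ) : Set Pt :=
  {p | p.1 = 0 ∧ p.2.1 = 0 ∧ p.2.2.1 = 0 ∧ p.2.2.2.2 = 0 ∧ tl ≤ p.2.2.2.1 ∧ p.2.2.2.1 ≤ tu}

def P1 (tu bl bu : ℝ) : Set Pt :=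
  {p | p.1 = 1 ∧ p.2.1 = 1 ∧ p.2.2.1 = 0 ∧ 0 ≤ p.2.2.2.1 ∧ p.2.2.2.1 ≤ tu ∧
    bl * p.2.2.2.1 ≤ p.2.2.2.2 ∧ p.2.2.2.2 ≤ bu * p.2.2.2.1}

def P2 (tl bl bu : ℝ) : Set Pt :=
  {p | p.1 = 1 ∧ p.2.1 = 0 ∧ p.2.2.1 = 1 ∧ tl ≤ p.2.2.2.1 ∧ p.2.2.2.1 ≤ 0 ∧
    bu * p.2.2.2.1 ≤ p.2.2.2.2 ∧ p.2.2.2.2 ≤ bl * p.2.2.2.1}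

theorem stmt_7 (tl tu bl bu : ℝ) (h1 : tl < 0) (h2 : 0 < tu) (h3 : bl < 0) (h4 : 0 < bu) :
    (∀ p ∈ P0 tl tu ∪ P1 tu bl bu ∪ P2 tl bl bu,
      tu * bl * p.2.1 + tu * bu * p.2.2.1 + bu * p.2.2.2.1 - p.2.2.2.2 ≤ tu * bu) ∧
    (∀ p ∈ convexHull ℝ (P0 tl tu ∪ P1 tu bl bu ∪ P2 tl bl bu),
      tu * bl * p.2.1 + tu * bu * p.2.2.1 + bu * p.2.2.2.1 - p.2.2.2.2 ≤ tu * bu) := by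
  have key : ∀ p ∈ P0 tl tu ∪ P1 tu bl bu ∪ P2 tl bl bu,
      tu * bl * p.2.1 + tu * bu * p.2.2.1 + bu * p.2.2.2.1 - p.2.2.2.2 ≤ tu * bu := by
    rintro p ((⟨-, h, h', h'', -, ht⟩ | ⟨-, h, h', ht0, ht, hd, -⟩) | ⟨-, h, h', -, -, hd, -⟩) <;>
      rw [h, h'] <;> nlinarith
  refine ⟨key, ?_⟩
  have hconv : Convex ℝ {p : Pt |
      tu * bl * p.2.1 + tu * bu * p.2.2.1 + bu * p.2.2.2.1 - p.2.2.2.2 ≤ tu * bu} := by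
    intro x hx y hy a b ha hb hab
    simp only [Set.mem_setOf_eq, Prod.smul_def, Prod.mk_add_mk, Prod.fst_add, Prod.snd_add,
      smul_eq_mul] at *
    have h1' := mul_le_mul_of_nonneg_left hx ha
    have h2' := mul_le_mul_of_nonneg_left hy hb
    have h3' : a * (tu * bu) + b * (tu * bu) = tu * bu := by
      rw [← add_mul, hab, one_mul]
    nlinarith [h1', h2', h3']
  exact fun p hp => convexHull_min key hconv hp
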